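/- Let R be a norm on ℝ^p with dual norm R*(z) = sup{zᵀw : R(w) ≤ 1}, let L : ℝ^p → ℝ be convex and differentiable, let λ > 0, β* ∈ ℝ^p, r > 0, and let β̃ be a minimizer of β ↦ L(β) + λ·R(β) over the closed Euclidean ball {β : ‖β − β*‖₂ ≤ r}. Assume R*(∇L(β*)) ≤ λ/2, and assume there is α > 0 such that L(β* + u) − L(β*) − ∇L(β*)ᵀu ≥ α‖u‖₂² for every u with ‖u‖₂ ≤ r and R(u)/2 + R(β*) − R(β* + u) ≥ 0. Let Φ := sup{R(u)/‖u‖₂ : u ≠ 0, R(u)/2 + R(β*) − R(β* + u) ≥ 0} and suppose Φ < ∞ and 3λΦ/(2α) < r. Then ‖β̃ − β*‖₂ < r and β̃ is a global minimizer of β ↦ L(β) + λ·R(β) over all of ℝ^p. -/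

import Mathlib

open scoped RealInnerProductSpace

lemma grad_convex_ineq {p : ℕ} (L : EuclideanSpace ℝ (Fin p) → ℝ)
    (hconv : ConvexOn ℝ Set.univ L) {x : EuclideanSpace ℝ (Fin p)}
    (hd : DifferentiableAt ℝ L x) (u : EuclideanSpace ℝ (Fin p)) :
    ⟪gradient L x, u⟫ ≤ L (x + u) - L x := by
  have hline : HasDerivAt (fun t : ℝ => x + t • u) u 0 := by
    simpa using ((hasDerivAt_id (0:ℝ)).smul_const u).const_add x
  have hF : HasFDerivAt L (InnerProductSpace.toDual ℝ _ (gradient L x)) x :=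
    hd.hasGradientAt
  have hx0 : ((fun t : ℝ => x + t • u) 0) = x := by simp
  have hF' : HasFDerivAt L (InnerProductSpace.toDual ℝ _ (gradient L x))
      ((fun t : ℝ => x + t • u) 0) := by rw [hx0]; exact hF
  have hg : HasDerivAt (fun t : ℝ => L (x + t • u)) ⟪gradient L x, u⟫ 0 := by
    simpa [InnerProductSpace.toDual_apply_apply, Function.comp_def] using hF'.comp_hasDerivAt 0 hline
  have hgc : ConvexOn ℝ Set.univ (fun t : ℝ => L (x + t • u)) := by
    have := hconv.comp_affineMap (AffineMap.lineMap x (x + u))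
    simp only [Set.preimage_univ] at this
    convert this using 2 with t
    exacts [rfl, rfl, rfl, rfl, by simp [AffineMap.lineMap_apply, add_comm]]
  have := hgc.le_slope_of_hasDerivAt (Set.mem_univ (0:ℝ)) (Set.mem_univ 1)
    one_pos hg
  simpa [slope_def_field] using this



/-- **The locally constrained robust penalized estimator is the global optimum.**
Under the deviation condition, the restricted eigenvalue condition, and the scaling
`3λΦ/(2α) < r`, the constrained minimizer `β̃` satisfies `‖β̃ - β*‖₂ < r` and is a global
minimizer of `β ↦ L(β) + λR(β)` over all of `ℝ^p`. -/
theorem robust_penalized_local_is_global {p : ℕ}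
    (R : EuclideanSpace ℝ (Fin p) → ℝ)
    (hR_add : ∀ x y, R (x + y) ≤ R x + R y)
    (hR_smul : ∀ (c : ℝ) (x), R (c • x) = |c| * R x)
    (hR_pos : ∀ x, x ≠ 0 → 0 < R x)
    (L : EuclideanSpace ℝ (Fin p) → ℝ)
    (hL_conv : ConvexOn ℝ Set.univ L)
    (hL_diff : ∀ x, DifferentiableAt ℝ L x)
    (lam : ℝ) (hlam : 0 < lam)
    (βs βt : EuclideanSpace ℝ (Fin p)) (r : ℝ) (hr : 0 < r)
    -- `βt` is a minimizer of `L + lam • R` over the closed ball of radius `r` around `βs`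
    (hfeas : ‖βt - βs‖ ≤ r)
    (hmin : ∀ β, ‖β - βs‖ ≤ r → L βt + lam * R βt ≤ L β + lam * R β)
    -- deviation condition: the dual norm of the gradient at `βs` is at most `lam/2`
    (hdev : ∀ w, R w ≤ 1 → ⟪gradient L βs, w⟫ ≤ lam / 2)
    -- restricted eigenvalue condition on the cone intersected with the ball
    (α : ℝ) (hα : 0 < α)
    (hRE : ∀ u, ‖u‖ ≤ r → R u / 2 + R βs - R (βs + u) ≥ 0 →
      L (βs + u) - L βs - ⟪gradient L βs, u⟫ ≥ α * ‖u‖ ^ 2)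
    -- `Φ` is an upper bound for the subspace compatibility constant of the cone
    (Φ : ℝ) (hΦ0 : 0 ≤ Φ)
    (hΦ : ∀ u, u ≠ 0 → R u / 2 + R βs - R (βs + u) ≥ 0 → R u ≤ Φ * ‖u‖)
    -- scaling condition: the error bound is strictly smaller than the local radius
    (hscale : 3 * lam * Φ / (2 * α) < r) :
    ‖βt - βs‖ < r ∧
    ∀ β : EuclideanSpace ℝ (Fin p), L βt + lam * R βt ≤ L β + lam * R β := by
  set g := gradient L βs with hg
  set u := βt - βs with hu
  have hbu : βs + u = βt := by simp [hu]
  -- R is nonneg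
  have hR_nonneg : ∀ x, 0 ≤ R x := by
    intro x
    rcases eq_or_ne x 0 with h | h
    · have := hR_smul 0 x; simp at this; simp [h, this]
    · exact (hR_pos x h).le
  -- dual bound
  have hdual : ∀ v, |⟪g, v⟫| ≤ lam / 2 * R v := by
    intro v
    rcases eq_or_ne v 0 with h | h
    · have h0 : R (0 : EuclideanSpace ℝ (Fin p)) = 0 := by
        have := hR_smul 0 0; simpa using this
      simp [h, h0]
    · have hc : 0 < R v := hR_pos v h
      have h1 : ⟪g, (R v)⁻¹ • v⟫ ≤ lam / 2 := by
        apply hdev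
        rw [hR_smul]
        rw [abs_of_pos (inv_pos.mpr hc)]
        rw [inv_mul_cancel₀ hc.ne']
      have h2 : ⟪g, -((R v)⁻¹ • v)⟫ ≤ lam / 2 := by
        apply hdev
        rw [show -((R v)⁻¹ • v) = (-(R v)⁻¹) • v by simp [neg_smul]]
        rw [hR_smul, abs_neg, abs_of_pos (inv_pos.mpr hc), inv_mul_cancel₀ hc.ne']
      rw [real_inner_smul_right] at h1
      rw [inner_neg_right, real_inner_smul_right] at h2
      have e : R v * ((R v)⁻¹ * ⟪g, v⟫) = ⟪g, v⟫ := by field_simp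
      have e1 := mul_le_mul_of_nonneg_left h1 hc.le
      have e2 := mul_le_mul_of_nonneg_left h2 hc.le
      rw [e] at e1
      rw [mul_neg, e] at e2
      rw [abs_le]
      constructor <;> nlinarith
  -- basic inequality
  have hbasic : L βt + lam * R βt ≤ L βs + lam * R βs := by
    have := hmin βs (by simp [hr.le])
    exact this
  have hgradle : ⟪g, u⟫ ≤ L βt - L βs := by
    have := grad_convex_ineq L hL_conv (hL_diff βs) u
    rwa [hbu] at this
  -- cone membership
  have hcone : R u / 2 + R βs - R (βs + u) ≥ 0 := by
    rw [hbu]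
    have h1 : -(lam / 2 * R u) ≤ ⟪g, u⟫ := neg_le_of_abs_le (hdual u)
    nlinarith [hgradle, hbasic]
  -- strict bound
  have hlt : ‖u‖ < r := by
    rcases eq_or_ne u 0 with h | h
    · simpa [h] using hr
    · have hRE' := hRE u hfeas hcone
      rw [hbu] at hRE'
      have hRu : R u ≤ Φ * ‖u‖ := hΦ u h hcone
      -- R βs ≤ R βt + R u
      have htri : R βs ≤ R βt + R u := by
        have h1 : R (βt + (-1 : ℝ) • u) ≤ R βt + R ((-1 : ℝ) • u) := hR_add βt _
        have h2 : βt + (-1 : ℝ) • u = βs := by simp [hu]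
        rw [h2, hR_smul] at h1
        simpa using h1
      have habs : |⟪g, u⟫| ≤ lam / 2 * R u := hdual u
      have hnu : 0 < ‖u‖ := norm_pos_iff.mpr h
      -- α ‖u‖² ≤ (3 lam / 2) R u
      have hkey : α * ‖u‖ ^ 2 ≤ 3 * lam / 2 * (Φ * ‖u‖) := by
        have h1 : -(lam / 2 * R u) ≤ ⟪g, u⟫ := neg_le_of_abs_le habs
        nlinarith [hR_nonneg u]
      have h2 : α * ‖u‖ ≤ 3 * lam / 2 * Φ := by
        have := mul_le_mul_of_nonneg_right hkey (le_of_lt (inv_pos.mpr hnu))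
        calc α * ‖u‖ = α * ‖u‖ ^ 2 * ‖u‖⁻¹ := by field_simp
        _ ≤ 3 * lam / 2 * (Φ * ‖u‖) * ‖u‖⁻¹ := this
        _ = 3 * lam / 2 * Φ := by field_simp
      calc ‖u‖ = α * ‖u‖ / α := by field_simp
      _ ≤ 3 * lam / 2 * Φ / α := by gcongr
      _ = 3 * lam * Φ / (2 * α) := by ring
      _ < r := hscale
  refine ⟨hlt, ?_⟩
  -- global minimality
  have hRconv : ConvexOn ℝ Set.univ R := by
    refine ⟨convex_univ, ?_⟩
    intro x _ y _ a b ha hb hab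
    calc R (a • x + b • y) ≤ R (a • x) + R (b • y) := hR_add _ _
    _ = a * R x + b * R y := by
        rw [hR_smul, hR_smul, abs_of_nonneg ha, abs_of_nonneg hb]
    _ = a • R x + b • R y := rfl
  have hFconv : ConvexOn ℝ Set.univ (fun β => L β + lam * R β) := by
    exact hL_conv.add (hRconv.smul hlam.le)
  intro β
  rcases eq_or_ne β βt with h | h
  · simp [h]
  · set d := β - βt with hd
    have hnd : 0 < ‖d‖ := norm_pos_iff.mpr (sub_ne_zero.mpr h)
    set t : ℝ := min 1 ((r - ‖u‖) / ‖d‖) with ht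
    have ht0 : 0 < t := lt_min one_pos (div_pos (by linarith) hnd)
    have ht1 : t ≤ 1 := min_le_left _ _
    have htd : t * ‖d‖ ≤ r - ‖u‖ := by
      have h1 : t ≤ (r - ‖u‖) / ‖d‖ := min_le_right _ _
      calc t * ‖d‖ ≤ (r - ‖u‖) / ‖d‖ * ‖d‖ := by
            exact mul_le_mul_of_nonneg_right h1 hnd.le
      _ = r - ‖u‖ := by field_simp
    have hmem : ‖(βt + t • d) - βs‖ ≤ r := by
      have : (βt + t • d) - βs = u + t • d := by
        rw [hu]; abel
      rw [this]
      calc ‖u + t • d‖ ≤ ‖u‖ + ‖t • d‖ := norm_add_le _ _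
      _ = ‖u‖ + |t| * ‖d‖ := by rw [norm_smul, Real.norm_eq_abs]
      _ = ‖u‖ + t * ‖d‖ := by rw [abs_of_pos ht0]
      _ ≤ r := by linarith
    have hcvx := hFconv.2 (Set.mem_univ βt) (Set.mem_univ β)
      (by linarith : (0:ℝ) ≤ 1 - t) ht0.le (by ring)
    have heq : (1 - t) • βt + t • β = βt + t • d := by
      rw [hd, smul_sub, sub_smul, one_smul]; abel
    rw [heq] at hcvx
    have hm := hmin (βt + t • d) hmem
    have hkey2 : L βt + lam * R βt ≤ (1 - t) • (L βt + lam * R βt) + t • (L β + lam * R β) :=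
      le_trans hm hcvx
    rw [smul_eq_mul, smul_eq_mul, sub_mul, one_mul] at hkey2
    have h3 : t * (L βt + lam * R βt) ≤ t * (L β + lam * R β) := by linarith
    exact le_of_mul_le_mul_left h3 ht0
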